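/- Let 𝕂 be an algebraically closed field of characteristic p > 2 with p ∤ r, and let (α, j) ∈ Spec_p(D_{r,n}), i.e. a weight occurring in some irreducible completely splittable integral D_{r,n}-module. Suppose α_i = α_k for some 1 ≤ i < k ≤ n with j_i = j_k. Then {α_i + 1, α_i − 1} ⊆ {α_{i_1},…,α_{i_s}}, where i+1 ≤ i_1,…,i_s ≤ k−1 are all the indices with j_{i_1} = ⋯ = j_{i_s} = j_i = j_k. -/

import Mathlib

open scoped BigOperators

namespace DegYH

variable (K : Type) [Field K]

inductive DGen (n : ℕ) : Type
  | t : Fin n → DGen n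
  | f : Fin (n - 1) → DGen n
  | x : Fin n → DGen n

abbrev DFA (n : ℕ) : Type := FreeAlgebra K (DGen n)

noncomputable def dt {n : ℕ} (j : Fin n) : DFA K n := FreeAlgebra.ι K (DGen.t j)
noncomputable def df {n : ℕ} (i : Fin (n - 1)) : DFA K n := FreeAlgebra.ι K (DGen.f i)
noncomputable def dx {n : ℕ} (j : Fin n) : DFA K n := FreeAlgebra.ι K (DGen.x j)

def loFin {n : ℕ} (i : Fin (n - 1)) : Fin n := ⟨i.1, by have := i.2; omega⟩
def hiFin {n : ℕ} (i : Fin (n - 1)) : Fin n := ⟨i.1 + 1, by have := i.2; omega⟩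

/-- The simple transposition `s_i` acting on indices. -/
def sAct {n : ℕ} (i : Fin (n - 1)) (j : Fin n) : Fin n :=
  if j.1 = i.1 then hiFin i else if j.1 = i.1 + 1 then loFin i else j

/-- `e_i = (1/r) ∑_{s=0}^{r-1} t_i^s t_{i+1}^{-s}` (with `t^{-s}` written
`t^{(r-s) % r}`, using `t^r = 1` in the quotient). -/
noncomputable def de (r : ℕ) {n : ℕ} (i : Fin (n - 1)) : DFA K n :=
  (r : K)⁻¹ • ∑ s ∈ Finset.range r, dt K (loFin i) ^ s * dt K (hiFin i) ^ ((r - s) % r)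

/-- The defining relations of the degenerate affine Yokonuma–Hecke algebra `D_{r,n}`. -/
inductive DRel (r n : ℕ) : DFA K n → DFA K n → Prop
  | ff {i j : Fin (n - 1)} (h : i.1 + 2 ≤ j.1 ∨ j.1 + 2 ≤ i.1) :
      DRel r n (df K i * df K j) (df K j * df K i)
  | braid {i j : Fin (n - 1)} (h : j.1 = i.1 + 1) :
      DRel r n (df K i * df K j * df K i) (df K j * df K i * df K j)
  | tt (i j : Fin n) : DRel r n (dt K i * dt K j) (dt K j * dt K i)
  | ft (i : Fin (n - 1)) (j : Fin n) :
      DRel r n (df K i * dt K j) (dt K (sAct i j) * df K i)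
  | tpow (i : Fin n) : DRel r n (dt K i ^ r) 1
  | fsq (i : Fin (n - 1)) : DRel r n (df K i ^ 2) 1
  | xx (i j : Fin n) : DRel r n (dx K i * dx K j) (dx K j * dx K i)
  | fx (i : Fin (n - 1)) :
      DRel r n (df K i * dx K (hiFin i)) (dx K (loFin i) * df K i + de K r i)
  | fx' (i : Fin (n - 1)) (j : Fin n) (h : j ≠ loFin i ∧ j ≠ hiFin i) :
      DRel r n (df K i * dx K j) (dx K j * df K i)
  | tx (i j : Fin n) : DRel r n (dt K j * dx K i) (dx K i * dt K j)

/-- The degenerate affine Yokonuma–Hecke algebra `D_{r,n}` over `K`. -/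
abbrev DYH (r n : ℕ) : Type := RingQuot (DRel K r n)

noncomputable def dπ (r n : ℕ) : DFA K n →ₐ[K] DYH K r n :=
  RingQuot.mkAlgHom K (DRel K r n)

noncomputable def tD (r n : ℕ) (j : Fin n) : DYH K r n := dπ K r n (dt K j)
noncomputable def fD (r n : ℕ) (i : Fin (n - 1)) : DYH K r n := dπ K r n (df K i)
noncomputable def xD (r n : ℕ) (j : Fin n) : DYH K r n := dπ K r n (dx K j)

/-! ### Representations -/

/-- Simplicity (irreducibility) of a representation. -/
def SimpleRepK {A M : Type} [Semiring A] [Algebra K A] [AddCommGroup M] [Module K M]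
    (ρ : A →ₐ[K] Module.End K M) : Prop :=
  (∃ v : M, v ≠ 0) ∧
    ∀ W : Submodule K M, (∀ a : A, ∀ w ∈ W, ρ a w ∈ W) → W = ⊥ ∨ W = ⊤

variable {M : Type} [AddCommGroup M] [Module K M]

/-- An integral representation: all eigenvalues of the `x_i` lie in `I = ℤ·1 ⊆ K`. -/
def IntegralRep (r n : ℕ) (ρ : DYH K r n →ₐ[K] Module.End K M) : Prop :=
  ∀ (a : Fin n) (c : K), (∃ w : M, w ≠ 0 ∧ ρ (xD K r n a) w = c • w) → ∃ m : ℤ, c = (m : K)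

/-- A completely splittable representation: the `x_i` act semisimply. -/
def SplittableRep (r n : ℕ) (ρ : DYH K r n →ₐ[K] Module.End K M) : Prop :=
  ∀ a : Fin n, (ρ (xD K r n a)).IsSemisimple

/-- Membership in the generalized weight space `M_{(α,j)}`. -/
def InGenWtD (r n : ℕ) (ρ : DYH K r n →ₐ[K] Module.End K M) (ζ : K)
    (α : Fin n → K) (j : Fin n → Fin r) (w : M) : Prop :=
  ∀ a : Fin n,
    (∃ N : ℕ, ((ρ (xD K r n a) - α a • (1 : Module.End K M)) ^ N) w = 0) ∧
    ρ (tD K r n a) w = ζ ^ (j a : ℕ) • w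

/-- `w` is a weight vector of weight `(α, j)`: a simultaneous eigenvector with
`x_i`-eigenvalue `α_i` and `t_i`-eigenvalue `ζ_{j_i} = ζ^{j_i - 1}`. -/
def InWtD (r n : ℕ) (ρ : DYH K r n →ₐ[K] Module.End K M) (ζ : K)
    (α : Fin n → K) (j : Fin n → Fin r) (w : M) : Prop :=
  ∀ a : Fin n, ρ (xD K r n a) w = α a • w ∧ ρ (tD K r n a) w = ζ ^ (j a : ℕ) • w

/-- The weight `(s_iα, s_ij)` (or `(s_iα, j)` etc.) obtained by exchanging the
entries at places `i`, `i+1`. -/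
def swapWt {n : ℕ} {β : Type} (i : Fin (n - 1)) (α : Fin n → β) : Fin n → β :=
  α ∘ Equiv.swap (loFin i) (hiFin i)

end DegYH
namespace DegYH

section Alg

variable {K : Type} [Field K] {r n : ℕ} {ζ : K}
variable {M : Type} [AddCommGroup M] [Module K M]
variable (ρ : DYH K r n →ₐ[K] Module.End K M)

lemma rel_apply {a b : DFA K n} (h : DRel K r n a b) :
    ρ (dπ K r n a) = ρ (dπ K r n b) :=
  congrArg ρ (RingQuot.mkAlgHom_rel K h)

lemma Fsq (i : Fin (n - 1)) : ρ (fD K r n i) * ρ (fD K r n i) = 1 := by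
  have h := rel_apply ρ (DRel.fsq (r := r) i)
  rw [map_pow, map_one, map_pow, pow_two] at h
  simpa [fD, map_mul] using h

lemma Fsq_apply (i : Fin (n - 1)) (w : M) : ρ (fD K r n i) (ρ (fD K r n i) w) = w := by
  have := congrArg (fun g => g w) (Fsq ρ i)
  simpa [Module.End.mul_apply] using this

lemma FX_hi (i : Fin (n - 1)) :
    ρ (fD K r n i) * ρ (xD K r n (hiFin i)) =
      ρ (xD K r n (loFin i)) * ρ (fD K r n i) + ρ (dπ K r n (de K r i)) := by
  have h := rel_apply ρ (DRel.fx (r := r) i)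
  simp only [map_mul, map_add] at h
  simpa [fD, xD] using h

lemma FX_other (i : Fin (n - 1)) (m : Fin n) (h1 : m ≠ loFin i) (h2 : m ≠ hiFin i) :
    ρ (fD K r n i) * ρ (xD K r n m) = ρ (xD K r n m) * ρ (fD K r n i) := by
  have h := rel_apply ρ (DRel.fx' (r := r) i m ⟨h1, h2⟩)
  rw [map_mul, map_mul, map_mul, map_mul] at h
  simpa [fD, xD] using h

lemma FT (i : Fin (n - 1)) (a : Fin n) :
    ρ (fD K r n i) * ρ (tD K r n a) = ρ (tD K r n (sAct i a)) * ρ (fD K r n i) := by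
  have h := rel_apply ρ (DRel.ft (r := r) i a)
  rw [map_mul, map_mul, map_mul, map_mul] at h
  simpa [fD, tD] using h

lemma braidF (i1 i2 : Fin (n - 1)) (h : i2.1 = i1.1 + 1) :
    ρ (fD K r n i1) * ρ (fD K r n i2) * ρ (fD K r n i1) =
      ρ (fD K r n i2) * ρ (fD K r n i1) * ρ (fD K r n i2) := by
  have h := rel_apply ρ (DRel.braid (r := r) (i := i1) (j := i2) h)
  rw [map_mul, map_mul, map_mul, map_mul, map_mul, map_mul] at h
  simpa [fD] using h

lemma sAct_eq_swap (i : Fin (n - 1)) (a : Fin n) :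
    sAct i a = Equiv.swap (loFin i) (hiFin i) a := by
  unfold sAct
  rcases Nat.decEq a.1 i.1 with h | h
  · rcases Nat.decEq a.1 (i.1 + 1) with h' | h'
    · rw [if_neg h, if_neg h', Equiv.swap_apply_of_ne_of_ne]
      · exact fun hc => h (by rw [hc]; rfl)
      · exact fun hc => h' (by rw [hc]; rfl)
    · have : a = hiFin i := Fin.ext h'
      rw [if_neg h, if_pos h', this, Equiv.swap_apply_right]
  · have : a = loFin i := Fin.ext h
    rw [if_pos h, this, Equiv.swap_apply_left]

lemma sAct_invol (i : Fin (n - 1)) (a : Fin n) : sAct i (sAct i a) = a := by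
  rw [sAct_eq_swap, sAct_eq_swap, Equiv.swap_apply_self]

lemma pow_apply_smul (g : Module.End K M) (c : K) (w : M) (h : g w = c • w) :
    ∀ m : ℕ, (g ^ m) w = c ^ m • w := by
  intro m
  induction m with
  | zero => simp
  | succ k ih =>
      rw [pow_succ, Module.End.mul_apply, h, map_smul, ih, smul_smul, pow_succ]
      ring_nf

end Alg

end DegYH
namespace DegYH

section Alg2

variable {K : Type} [Field K] {r n : ℕ} {ζ : K}
variable {M : Type} [AddCommGroup M] [Module K M]
variable (ρ : DYH K r n →ₐ[K] Module.End K M)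

lemma geom_sum_root (hζ : IsPrimitiveRoot ζ r) (hr0 : 0 < r) (a b : ℕ) (ha : a < r) (hb : b < r) :
    ∑ s ∈ Finset.range r, (ζ ^ a) ^ s * (ζ ^ b) ^ ((r - s) % r) =
      if a = b then (r : K) else 0 := by
  have hζr : ζ ^ r = 1 := hζ.pow_eq_one
  have hζne : ζ ≠ 0 := by
    intro h
    rw [h, zero_pow (by omega)] at hζr
    exact zero_ne_one hζr
  have hbne : (ζ : K) ^ b ≠ 0 := pow_ne_zero _ hζne
  set u : K := ζ ^ a * (ζ ^ b)⁻¹ with hu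
  have hur : u ^ r = 1 := by
    rw [hu, mul_pow, inv_pow, ← pow_mul, ← pow_mul, Nat.mul_comm a r, Nat.mul_comm b r,
      pow_mul, pow_mul, hζr, one_pow, one_pow, inv_one, mul_one]
  have hterm : ∀ s ∈ Finset.range r,
      (ζ ^ a) ^ s * (ζ ^ b) ^ ((r - s) % r) = u ^ s := by
    intro s hs
    rw [Finset.mem_range] at hs
    rcases Nat.eq_zero_or_pos s with h0 | h0
    · subst h0; simp
    · have hmod : (r - s) % r = r - s := Nat.mod_eq_of_lt (by omega)
      have hrs : (ζ ^ b) ^ (r - s) * (ζ ^ b) ^ s = 1 := by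
        rw [← pow_add]
        have : r - s + s = r := by omega
        rw [this, ← pow_mul, Nat.mul_comm, pow_mul, hζr, one_pow]
      have : (ζ ^ b) ^ (r - s) = ((ζ ^ b) ^ s)⁻¹ := by
        field_simp
        linear_combination hrs
      rw [hmod, this, hu, mul_pow, inv_pow]
  rw [Finset.sum_congr rfl hterm]
  by_cases hab : a = b
  · subst hab
    have : u = 1 := by rw [hu, mul_inv_cancel₀ (pow_ne_zero _ hζne)]
    simp [this]
  · have hune : u ≠ 1 := by
      intro h
      apply hab
      apply hζ.pow_inj ha hb
      have : ζ ^ a = ζ ^ b := by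
        have := congrArg (fun x => x * ζ ^ b) h
        simpa [hu, mul_assoc, inv_mul_cancel₀ hbne] using this
      exact this
    have := geom_sum_mul u r
    rw [hur, sub_self] at this
    have hsum : ∑ s ∈ Finset.range r, u ^ s = 0 := by
      rcases mul_eq_zero.mp this with h | h
      · exact h
      · exact absurd (by linear_combination h : u = 1) hune
    simp [hsum, hab]

lemma tD_apply_pow (a : Fin n) (c : K) (w : M) (h : ρ (tD K r n a) w = c • w) (m : ℕ) :
    (ρ (tD K r n a) ^ m) w = c ^ m • w :=
  pow_apply_smul _ _ _ h m

lemma E_apply (hζ : IsPrimitiveRoot ζ r) (hr0 : 0 < r) (hrK : (r : K) ≠ 0)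
    (i : Fin (n - 1)) (w : M) (a b : Fin r)
    (hlo : ρ (tD K r n (loFin i)) w = ζ ^ (a : ℕ) • w)
    (hhi : ρ (tD K r n (hiFin i)) w = ζ ^ (b : ℕ) • w) :
    ρ (dπ K r n (de K r i)) w = if a = b then w else 0 := by
  have hde : ρ (dπ K r n (de K r i)) =
      (r : K)⁻¹ • ∑ s ∈ Finset.range r,
        ρ (tD K r n (loFin i)) ^ s * ρ (tD K r n (hiFin i)) ^ ((r - s) % r) := by
    rw [de, map_smul, map_smul, map_sum, map_sum]
    congr 1
    refine Finset.sum_congr rfl fun s _ => ?_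
    rw [map_mul, map_pow, map_pow, map_mul, map_pow, map_pow]
    rfl
  rw [hde]
  have happ : (∑ s ∈ Finset.range r,
      ρ (tD K r n (loFin i)) ^ s * ρ (tD K r n (hiFin i)) ^ ((r - s) % r)) w =
      (∑ s ∈ Finset.range r, (ζ ^ (a : ℕ)) ^ s * (ζ ^ (b : ℕ)) ^ ((r - s) % r)) • w := by
    rw [LinearMap.sum_apply, Finset.sum_smul]
    refine Finset.sum_congr rfl fun s _ => ?_
    rw [Module.End.mul_apply, tD_apply_pow ρ _ _ _ hhi, map_smul,
      tD_apply_pow ρ _ _ _ hlo, smul_smul, mul_comm]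
  rw [LinearMap.smul_apply, happ, geom_sum_root hζ hr0 _ _ a.2 b.2]
  by_cases hab : (a : ℕ) = (b : ℕ)
  · rw [if_pos hab, if_pos (Fin.ext hab), smul_smul, inv_mul_cancel₀ hrK, one_smul]
  · rw [if_neg hab, if_neg (fun h => hab (congrArg Fin.val h)), zero_smul, smul_zero]

end Alg2

end DegYH
namespace DegYH

section Alg3

variable {K : Type} [Field K] {r n : ℕ} {ζ : K}
variable {M : Type} [AddCommGroup M] [Module K M]
variable (ρ : DYH K r n →ₐ[K] Module.End K M)

lemma sAct_lo (i : Fin (n - 1)) : sAct i (loFin i) = hiFin i := by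
  unfold sAct loFin; simp

lemma sAct_hi (i : Fin (n - 1)) : sAct i (hiFin i) = loFin i := by
  unfold sAct hiFin
  simp only [if_neg (by omega : ¬ (i.1 + 1 : ℕ) = i.1)]
  simp

variable {α : Fin n → K} {j : Fin n → Fin r} {w : M}

lemma T_F_apply (hw : InWtD K r n ρ ζ α j w) (i : Fin (n - 1)) (a : Fin n) :
    ρ (tD K r n a) (ρ (fD K r n i) w) =
      ζ ^ ((j (sAct i a)) : ℕ) • ρ (fD K r n i) w := by
  have h := congrArg (fun g => g w) (FT ρ i (sAct i a))
  simp only [Module.End.mul_apply, sAct_invol] at h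
  rw [(hw (sAct i a)).2, map_smul] at h
  exact h.symm

lemma E_w_apply (hζ : IsPrimitiveRoot ζ r) (hr0 : 0 < r) (hrK : (r : K) ≠ 0)
    (hw : InWtD K r n ρ ζ α j w) (i : Fin (n - 1)) :
    ρ (dπ K r n (de K r i)) w = (if j (loFin i) = j (hiFin i) then w else 0) :=
  E_apply ρ hζ hr0 hrK i w (j (loFin i)) (j (hiFin i)) (hw _).2 (hw _).2

lemma E_F_apply (hζ : IsPrimitiveRoot ζ r) (hr0 : 0 < r) (hrK : (r : K) ≠ 0)
    (hw : InWtD K r n ρ ζ α j w) (i : Fin (n - 1)) :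
    ρ (dπ K r n (de K r i)) (ρ (fD K r n i) w) =
      (if j (loFin i) = j (hiFin i) then ρ (fD K r n i) w else 0) := by
  have hlo : ρ (tD K r n (loFin i)) (ρ (fD K r n i) w) =
      ζ ^ ((j (hiFin i)) : ℕ) • ρ (fD K r n i) w := by
    have := T_F_apply ρ hw i (loFin i); rwa [sAct_lo] at this
  have hhi : ρ (tD K r n (hiFin i)) (ρ (fD K r n i) w) =
      ζ ^ ((j (loFin i)) : ℕ) • ρ (fD K r n i) w := by
    have := T_F_apply ρ hw i (hiFin i); rwa [sAct_hi] at this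
  have h := E_apply ρ hζ hr0 hrK i (ρ (fD K r n i) w) (j (hiFin i)) (j (loFin i)) hlo hhi
  by_cases hj : j (loFin i) = j (hiFin i)
  · rw [if_pos hj.symm] at h; rw [if_pos hj]; exact h
  · rw [if_neg (fun hc => hj hc.symm)] at h; rw [if_neg hj]; exact h

lemma X_F_lo_apply (hζ : IsPrimitiveRoot ζ r) (hr0 : 0 < r) (hrK : (r : K) ≠ 0)
    (hw : InWtD K r n ρ ζ α j w) (i : Fin (n - 1)) :
    ρ (xD K r n (loFin i)) (ρ (fD K r n i) w) =
      α (hiFin i) • ρ (fD K r n i) w - (if j (loFin i) = j (hiFin i) then w else 0) := by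
  have h := congrArg (fun g => g w) (FX_hi ρ i)
  simp only [Module.End.mul_apply, LinearMap.add_apply] at h
  rw [(hw (hiFin i)).1, map_smul, E_w_apply ρ hζ hr0 hrK hw i] at h
  exact (eq_sub_of_add_eq h.symm)

lemma X_F_hi_apply (hζ : IsPrimitiveRoot ζ r) (hr0 : 0 < r) (hrK : (r : K) ≠ 0)
    (hw : InWtD K r n ρ ζ α j w) (i : Fin (n - 1)) :
    ρ (xD K r n (hiFin i)) (ρ (fD K r n i) w) =
      α (loFin i) • ρ (fD K r n i) w + (if j (loFin i) = j (hiFin i) then w else 0) := by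
  have h := congrArg (fun g => g (ρ (fD K r n i) w)) (FX_hi ρ i)
  simp only [Module.End.mul_apply, LinearMap.add_apply] at h
  rw [Fsq_apply ρ i w, E_F_apply ρ hζ hr0 hrK hw i, (hw (loFin i)).1] at h
  calc ρ (xD K r n (hiFin i)) (ρ (fD K r n i) w)
      = ρ (fD K r n i) (ρ (fD K r n i) (ρ (xD K r n (hiFin i)) (ρ (fD K r n i) w))) :=
        (Fsq_apply ρ i _).symm
    _ = ρ (fD K r n i) (α (loFin i) • w +
          (if j (loFin i) = j (hiFin i) then ρ (fD K r n i) w else 0)) := by rw [h]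
    _ = α (loFin i) • ρ (fD K r n i) w + (if j (loFin i) = j (hiFin i) then w else 0) := by
        rw [map_add, map_smul, apply_ite (ρ (fD K r n i)), map_zero, Fsq_apply ρ i w]

lemma X_F_other_apply (hw : InWtD K r n ρ ζ α j w) (i : Fin (n - 1)) (m : Fin n)
    (h1 : m ≠ loFin i) (h2 : m ≠ hiFin i) :
    ρ (xD K r n m) (ρ (fD K r n i) w) = α m • ρ (fD K r n i) w := by
  have h := congrArg (fun g => g w) (FX_other ρ i m h1 h2)
  simp only [Module.End.mul_apply] at h
  rw [(hw m).1, map_smul] at h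
  exact h.symm

end Alg3

end DegYH
namespace DegYH

section Alg4

variable {K : Type} [Field K] {r n : ℕ} {ζ : K}
variable {M : Type} [AddCommGroup M] [Module K M]
variable (ρ : DYH K r n →ₐ[K] Module.End K M)

/-- The weight predicate: `(α, j)` occurs as a weight of the module. -/
def Wt (α : Fin n → K) (j : Fin n → Fin r) : Prop :=
  ∃ w : M, w ≠ 0 ∧ InWtD K r n ρ ζ α j w

lemma swapWt_lo {β : Type} (i : Fin (n - 1)) (α : Fin n → β) :
    swapWt i α (loFin i) = α (hiFin i) := by
  simp [swapWt, Equiv.swap_apply_left]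

lemma swapWt_hi {β : Type} (i : Fin (n - 1)) (α : Fin n → β) :
    swapWt i α (hiFin i) = α (loFin i) := by
  simp [swapWt, Equiv.swap_apply_right]

lemma swapWt_other {β : Type} (i : Fin (n - 1)) (α : Fin n → β) (m : Fin n)
    (h1 : m ≠ loFin i) (h2 : m ≠ hiFin i) : swapWt i α m = α m := by
  simp [swapWt, Equiv.swap_apply_of_ne_of_ne h1 h2]

lemma swapWt_eq_self {β : Type} (i : Fin (n - 1)) (j : Fin n → β)
    (hj : j (loFin i) = j (hiFin i)) : swapWt i j = j := by
  funext a
  by_cases h1 : a = loFin i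
  · rw [h1, swapWt_lo, hj]
  · by_cases h2 : a = hiFin i
    · rw [h2, swapWt_hi, hj]
    · rw [swapWt_other _ _ _ h1 h2]

lemma j_sAct_eq (i : Fin (n - 1)) (j : Fin n → Fin r)
    (hj : j (loFin i) = j (hiFin i)) (a : Fin n) : j (sAct i a) = j a := by
  rw [sAct_eq_swap]
  exact congrFun (swapWt_eq_self i j hj) a

lemma swapWt_apply {β : Type} (i : Fin (n - 1)) (α : Fin n → β) (a : Fin n) :
    swapWt i α a = α (Equiv.swap (loFin i) (hiFin i) a) := rfl

/-- Intertwiner: swapping at `i` preserves being a weight when the `t`-eigenvalues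
differ, or they agree and the `x`-eigenvalues are "nonadjacent". -/
lemma Wt_swap (hζ : IsPrimitiveRoot ζ r) (hr0 : 0 < r) (hrK : (r : K) ≠ 0)
    {α : Fin n → K} {j : Fin n → Fin r}
    (h : Wt (ζ := ζ) ρ α j) (i : Fin (n - 1))
    (hcond : j (loFin i) ≠ j (hiFin i) ∨
      (j (loFin i) = j (hiFin i) ∧ α (hiFin i) - α (loFin i) ≠ 0 ∧
        α (hiFin i) - α (loFin i) ≠ 1 ∧ α (hiFin i) - α (loFin i) ≠ -1)) :
    Wt (ζ := ζ) ρ (swapWt i α) (swapWt i j) := by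
  obtain ⟨w, hwne, hw⟩ := h
  by_cases hj : j (loFin i) = j (hiFin i)
  · -- t-eigenvalues agree
    obtain ⟨hd0, hd1, hdm1⟩ : α (hiFin i) - α (loFin i) ≠ 0 ∧
        α (hiFin i) - α (loFin i) ≠ 1 ∧ α (hiFin i) - α (loFin i) ≠ -1 := by
      rcases hcond with hc | hc
      · exact absurd hj hc
      · exact hc.2
    set β := α (loFin i) with hβ
    set γ := α (hiFin i) with hγ
    have hβγ : β - γ ≠ 0 := fun hc => hd0 (by linear_combination -hc)
    set c : K := (β - γ)⁻¹ with hc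
    have hcβγ : c * (β - γ) = 1 := inv_mul_cancel₀ hβγ
    refine ⟨ρ (fD K r n i) w + c • w, ?_, ?_⟩
    · intro hv
      have hfw : ρ (fD K r n i) w = -(c • w) := by
        have := neg_eq_of_add_eq_zero_left hv
        rw [← this]
      have hw2 : w = (c * c) • w := by
        conv_lhs => rw [← Fsq_apply ρ i w]
        rw [hfw, map_neg, map_smul, hfw, smul_neg, neg_neg, smul_smul]
      have hc2 : c * c = 1 := by
        have h0 : (c * c - 1) • w = 0 := by
          rw [sub_smul, one_smul, ← hw2, sub_self]
        rcases smul_eq_zero.mp h0 with h | h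
        · linear_combination h
        · exact absurd h hwne
      have h1 : (β - γ) * (β - γ) = 1 := by
        have h2 : c * (β - γ) * (c * (β - γ)) = 1 := by rw [hcβγ, mul_one]
        calc (β - γ) * (β - γ) = (c * c) * ((β - γ) * (β - γ)) := by rw [hc2, one_mul]
        _ = c * (β - γ) * (c * (β - γ)) := by ring
        _ = 1 := h2
      have hsq : (γ - β - 1) * (γ - β + 1) = 0 := by linear_combination h1
      rcases mul_eq_zero.mp hsq with h | h
      · exact hd1 (by linear_combination h)
      · exact hdm1 (by linear_combination h)
    · intro a
      rw [swapWt_eq_self i j hj]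
      constructor
      · by_cases h1 : a = loFin i
        · rw [h1, swapWt_lo, map_add, map_smul,
            X_F_lo_apply ρ hζ hr0 hrK hw i, if_pos hj, (hw (loFin i)).1, ← hβ, ← hγ]
          match_scalars
          · ring
          · linear_combination hcβγ
        · by_cases h2 : a = hiFin i
          · rw [h2, swapWt_hi, map_add, map_smul,
              X_F_hi_apply ρ hζ hr0 hrK hw i, if_pos hj, (hw (hiFin i)).1, ← hβ, ← hγ]
            match_scalars
            · ring
            · linear_combination -hcβγ
          · rw [swapWt_other _ _ _ h1 h2, map_add, map_smul,
              X_F_other_apply ρ hw i a h1 h2, (hw a).1]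
            match_scalars <;> ring
      · rw [map_add, map_smul, T_F_apply ρ hw i a, (hw a).2, j_sAct_eq i j hj a]
        match_scalars <;> ring
  · -- t-eigenvalues differ
    have hcond' : j (loFin i) ≠ j (hiFin i) := hj
    refine ⟨ρ (fD K r n i) w, ?_, ?_⟩
    · intro hv
      apply hwne
      rw [← Fsq_apply ρ i w, hv, map_zero]
    · intro a
      constructor
      · by_cases h1 : a = loFin i
        · rw [h1, swapWt_lo, X_F_lo_apply ρ hζ hr0 hrK hw i, if_neg hj, sub_zero]
        · by_cases h2 : a = hiFin i
          · rw [h2, swapWt_hi, X_F_hi_apply ρ hζ hr0 hrK hw i, if_neg hj, add_zero]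
          · rw [swapWt_other _ _ _ h1 h2, X_F_other_apply ρ hw i a h1 h2]
      · rw [T_F_apply ρ hw i a, swapWt_apply, ← sAct_eq_swap]

/-- No weight has two adjacent equal entries (same `t`- and `x`-eigenvalue). -/
lemma adj_vec_zero (hζ : IsPrimitiveRoot ζ r) (hr0 : 0 < r) (hrK : (r : K) ≠ 0)
    (hsplit : SplittableRep K r n ρ)
    {α : Fin n → K} {j : Fin n → Fin r} (i : Fin (n - 1))
    (hj : j (loFin i) = j (hiFin i)) (hα : α (loFin i) = α (hiFin i))
    (w : M) (hw : InWtD K r n ρ ζ α j w) : w = 0 := by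
  by_contra hne
  have hX : ρ (xD K r n (loFin i)) (ρ (fD K r n i) w)
      = α (loFin i) • ρ (fD K r n i) w - w := by
    rw [X_F_lo_apply ρ hζ hr0 hrK hw i, if_pos hj, ← hα]
  set g := ρ (xD K r n (loFin i)) with hg
  set β := α (loFin i) with hβ
  set q : Module.End K M := g - β • 1 with hq
  have hqw : q w = 0 := by
    rw [hq, LinearMap.sub_apply, (hw (loFin i)).1, ← hβ]
    simp
  have hqu : q (ρ (fD K r n i) w) = -w := by
    rw [hq, LinearMap.sub_apply, hX]
    simp
  set p : Submodule K M := LinearMap.ker q with hp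
  have hpinv : p ∈ g.invtSubmodule := by
    rw [Module.End.mem_invtSubmodule]
    intro x hx
    simp only [hp, LinearMap.mem_ker, Submodule.mem_comap] at hx ⊢
    have hcomm : q (g x) = g (q x) := by
      simp only [hq, LinearMap.sub_apply, map_sub, LinearMap.smul_apply,
        Module.End.one_apply, map_smul]
    rw [hcomm, hx, map_zero]
  obtain ⟨p', hp', hcompl⟩ := (Module.End.isSemisimple_iff).mp (hsplit (loFin i)) p hpinv
  have hmem : ρ (fD K r n i) w ∈ p ⊔ p' := by
    rw [hcompl.sup_eq_top]; trivial
  obtain ⟨y, hy, z, hz, hyz⟩ := Submodule.mem_sup.mp hmem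
  have hqy : q y = 0 := hy
  have hqz : q z ∈ p' := by
    rw [hq, LinearMap.sub_apply]
    refine Submodule.sub_mem _ ?_ ?_
    · exact (Module.End.mem_invtSubmodule g).mp hp' hz
    · simpa using Submodule.smul_mem _ β hz
  have hqzw : q z = -w := by
    rw [← hqu, ← hyz, map_add, hqy, zero_add]
  have hwin : (-w) ∈ p ⊓ p' := Submodule.mem_inf.mpr
    ⟨by simp only [hp, LinearMap.mem_ker, map_neg, hqw, neg_zero], by rw [← hqzw]; exact hqz⟩
  rw [hcompl.inf_eq_bot, Submodule.mem_bot] at hwin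
  exact hne (by simpa using hwin)

end Alg4

end DegYH
namespace DegYH

section Alg5

variable {K : Type} [Field K] {r n : ℕ} {ζ : K}
variable {M : Type} [AddCommGroup M] [Module K M]
variable (ρ : DYH K r n →ₐ[K] Module.End K M)

/-- No weight has consecutive entries of the form `(a, a ± 1, a)` with equal
`t`-eigenvalues. -/
lemma Wt_aba (hζ : IsPrimitiveRoot ζ r) (hr0 : 0 < r) (hrK : (r : K) ≠ 0)
    (hsplit : SplittableRep K r n ρ) (h2K : (2 : K) ≠ 0)
    {α : Fin n → K} {j : Fin n → Fin r}
    (h : Wt (ζ := ζ) ρ α j) (i1 i2 : Fin (n - 1)) (h21 : i2.1 = i1.1 + 1)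
    (hj1 : j (loFin i1) = j (hiFin i1)) (hj2 : j (loFin i1) = j (hiFin i2))
    (ε : K) (hε : ε = 1 ∨ ε = -1) (hstep : α (hiFin i1) = α (loFin i1) + ε) :
    α (hiFin i2) ≠ α (loFin i1) := by
  intro heq
  obtain ⟨w, hwne, hw⟩ := h
  have hε2 : ε * ε = 1 := by rcases hε with h | h <;> rw [h] <;> norm_num
  have hlo2 : loFin i2 = hiFin i1 := Fin.ext (by simp [loFin, hiFin, h21])
  have hne1 : hiFin i2 ≠ loFin i1 := by
    intro hc; have := congrArg Fin.val hc; simp only [loFin, hiFin, h21] at this; omega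
  have hne2 : hiFin i2 ≠ hiFin i1 := by
    intro hc; have := congrArg Fin.val hc; simp only [loFin, hiFin, h21] at this; omega
  have hne3 : loFin i1 ≠ loFin i2 := by
    intro hc; have := congrArg Fin.val hc; simp only [loFin, hiFin, h21] at this; omega
  have hne4 : loFin i1 ≠ hiFin i2 := fun hc => hne1 hc.symm
  have hne5 : loFin i1 ≠ hiFin i1 := by
    intro hc; have := congrArg Fin.val hc; simp [loFin, hiFin] at this
  have hj22 : j (loFin i2) = j (hiFin i2) := by rw [hlo2, ← hj1, hj2]
  set a := α (loFin i1) with ha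
  -- first auxiliary vector
  set u : M := ρ (fD K r n i1) w - ε • w with hu
  have hwtu : InWtD K r n ρ ζ (swapWt i1 α) j u := by
    intro b
    constructor
    · by_cases h1 : b = loFin i1
      · rw [h1, swapWt_lo, hu, map_sub, map_smul,
          X_F_lo_apply ρ hζ hr0 hrK hw i1, if_pos hj1, (hw (loFin i1)).1]
        match_scalars
        all_goals first
          | ring1
          | linear_combination ε * hstep + hε2
          | linear_combination (-ε) * hstep - hε2
      · by_cases h2 : b = hiFin i1
        · rw [h2, swapWt_hi, hu, map_sub, map_smul,
            X_F_hi_apply ρ hζ hr0 hrK hw i1, if_pos hj1, (hw (hiFin i1)).1]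
          match_scalars
          all_goals first
            | ring1
            | linear_combination ε * hstep + hε2
            | linear_combination (-ε) * hstep - hε2
        · rw [swapWt_other _ _ _ h1 h2, hu, map_sub, map_smul,
            X_F_other_apply ρ hw i1 b h1 h2, (hw b).1]
          match_scalars <;> ring
    · rw [hu, map_sub, map_smul, T_F_apply ρ hw i1 b, (hw b).2, j_sAct_eq i1 j hj1 b]
      match_scalars <;> ring
  have hu0 : u = 0 := by
    refine adj_vec_zero ρ hζ hr0 hrK hsplit i2 hj22 ?_ u hwtu
    rw [hlo2, swapWt_hi, swapWt_other _ _ _ hne1 hne2, heq]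
  have hfw1 : ρ (fD K r n i1) w = ε • w := sub_eq_zero.mp hu0
  -- second auxiliary vector
  set v : M := ρ (fD K r n i2) w + ε • w with hv
  have hstep2 : α (loFin i2) = a + ε := by rw [hlo2, hstep]
  have hwtv : InWtD K r n ρ ζ (swapWt i2 α) j v := by
    intro b
    constructor
    · by_cases h1 : b = loFin i2
      · rw [h1, swapWt_lo, hv, map_add, map_smul,
          X_F_lo_apply ρ hζ hr0 hrK hw i2, if_pos hj22, (hw (loFin i2)).1, heq, hstep2]
        match_scalars
        all_goals first | ring1 | linear_combination hε2 | linear_combination -hε2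
      · by_cases h2 : b = hiFin i2
        · rw [h2, swapWt_hi, hv, map_add, map_smul,
            X_F_hi_apply ρ hζ hr0 hrK hw i2, if_pos hj22, (hw (hiFin i2)).1, heq, hstep2]
          match_scalars
          all_goals first | ring1 | linear_combination hε2 | linear_combination -hε2
        · rw [swapWt_other _ _ _ h1 h2, hv, map_add, map_smul,
            X_F_other_apply ρ hw i2 b h1 h2, (hw b).1]
          match_scalars <;> ring
    · rw [hv, map_add, map_smul, T_F_apply ρ hw i2 b, (hw b).2, j_sAct_eq i2 j hj22 b]
      match_scalars <;> ring
  have hv0 : v = 0 := by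
    refine adj_vec_zero ρ hζ hr0 hrK hsplit i1 hj1 ?_ v hwtv
    rw [swapWt_other _ _ _ hne3 hne4, ← hlo2, swapWt_lo, heq]
  have hfw2 : ρ (fD K r n i2) w = -(ε • w) := eq_neg_of_add_eq_zero_left hv0
  have hb := congrArg (fun g => g w) (braidF ρ i1 i2 h21)
  simp only [Module.End.mul_apply, hfw1, hfw2, map_smul, map_neg, smul_neg, neg_neg,
    smul_smul] at hb
  have hzero : ((ε * (ε * ε)) + (ε * (ε * ε))) • w = 0 := by
    rw [add_smul]
    nth_rewrite 1 [← hb]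
    exact neg_add_cancel _
  have hcoef : (ε * (ε * ε)) + (ε * (ε * ε)) ≠ 0 := by
    rcases hε with h | h <;> rw [h] <;> intro hc <;> apply h2K
    · linear_combination hc
    · linear_combination -hc
  rcases smul_eq_zero.mp hzero with h | h
  · exact hcoef h
  · exact hwne h

end Alg5

end DegYH
namespace DegYH

section Comb

variable {K : Type} [Field K] {r n : ℕ} {ζ : K}
variable {M : Type} [AddCommGroup M] [Module K M]
variable (ρ : DYH K r n →ₐ[K] Module.End K M)

/-- Index of the transposition at positions `P`, `P+1`. -/
def mkIdx (P : ℕ) (h : P + 1 < n) : Fin (n - 1) := ⟨P, by omega⟩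

lemma loFin_mkIdx (P : ℕ) (h : P + 1 < n) :
    loFin (mkIdx P h) = ⟨P, by omega⟩ := rfl

lemma hiFin_mkIdx (P : ℕ) (h : P + 1 < n) :
    hiFin (mkIdx P h) = ⟨P + 1, h⟩ := rfl

lemma swapWt_mk_lo {β : Type} (P : ℕ) (h : P + 1 < n) (α : Fin n → β) (m : Fin n)
    (hm : m.1 = P) : swapWt (mkIdx P h) α m = α ⟨P + 1, h⟩ := by
  have : m = loFin (mkIdx P h) := Fin.ext hm
  rw [this, swapWt_lo, hiFin_mkIdx]

lemma swapWt_mk_hi {β : Type} (P : ℕ) (h : P + 1 < n) (α : Fin n → β) (m : Fin n)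
    (hm : m.1 = P + 1) : swapWt (mkIdx P h) α m = α ⟨P, Nat.lt_of_succ_lt h⟩ := by
  have : m = hiFin (mkIdx P h) := Fin.ext hm
  rw [this, swapWt_hi, loFin_mkIdx]

lemma swapWt_mk_ne {β : Type} (P : ℕ) (h : P + 1 < n) (α : Fin n → β) (m : Fin n)
    (hm1 : m.1 ≠ P) (hm2 : m.1 ≠ P + 1) : swapWt (mkIdx P h) α m = α m := by
  refine swapWt_other _ _ _ (fun hc => hm1 ?_) (fun hc => hm2 ?_)
  · exact congrArg Fin.val hc
  · exact congrArg Fin.val hc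

variable (hζ : IsPrimitiveRoot ζ r) (hr0 : 0 < r) (hrK : (r : K) ≠ 0)
variable (hsplit : SplittableRep K r n ρ) (h2K : (2 : K) ≠ 0)

include hζ hr0 hrK hsplit h2K

/-- Adjacent equal entries are impossible, `ℕ`-indexed version. -/
lemma Wt_adj_ne_nat {α : Fin n → K} {jj : Fin n → Fin r} (h : Wt (ζ := ζ) ρ α jj)
    (P : ℕ) (hP : P + 1 < n) (hj : jj ⟨P, by omega⟩ = jj ⟨P + 1, hP⟩) :
    α ⟨P, by omega⟩ ≠ α ⟨P + 1, hP⟩ := by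
  intro heq
  obtain ⟨w, hwne, hw⟩ := h
  refine hwne (adj_vec_zero ρ hζ hr0 hrK hsplit (mkIdx P hP) ?_ ?_ w hw)
  · rw [loFin_mkIdx, hiFin_mkIdx]; exact hj
  · rw [loFin_mkIdx, hiFin_mkIdx]; exact heq

/-- Swapping at positions `P`, `P+1` with equal `t`-eigenvalues (here `j` is unchanged). -/
lemma Wt_swap_nat_jeq {α : Fin n → K} {jj : Fin n → Fin r} (h : Wt (ζ := ζ) ρ α jj)
    (P : ℕ) (hP : P + 1 < n) (hj : jj ⟨P, by omega⟩ = jj ⟨P + 1, hP⟩)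
    (h0 : α ⟨P + 1, hP⟩ - α ⟨P, by omega⟩ ≠ 0)
    (h1 : α ⟨P + 1, hP⟩ - α ⟨P, by omega⟩ ≠ 1)
    (hm1 : α ⟨P + 1, hP⟩ - α ⟨P, by omega⟩ ≠ -1) :
    Wt (ζ := ζ) ρ (swapWt (mkIdx P hP) α) jj := by
  have hj' : jj (loFin (mkIdx P hP)) = jj (hiFin (mkIdx P hP)) := by
    rw [loFin_mkIdx, hiFin_mkIdx]; exact hj
  have := Wt_swap ρ hζ hr0 hrK h (mkIdx P hP)
    (Or.inr ⟨hj', by rw [loFin_mkIdx, hiFin_mkIdx]; exact h0,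
      by rw [loFin_mkIdx, hiFin_mkIdx]; exact h1,
      by rw [loFin_mkIdx, hiFin_mkIdx]; exact hm1⟩)
  rwa [swapWt_eq_self _ _ hj'] at this

/-- Swapping at positions `P`, `P+1` with different `t`-eigenvalues. -/
lemma Wt_swap_nat_jne {α : Fin n → K} {jj : Fin n → Fin r} (h : Wt (ζ := ζ) ρ α jj)
    (P : ℕ) (hP : P + 1 < n) (hj : jj ⟨P, by omega⟩ ≠ jj ⟨P + 1, hP⟩) :
    Wt (ζ := ζ) ρ (swapWt (mkIdx P hP) α) (swapWt (mkIdx P hP) jj) :=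
  Wt_swap ρ hζ hr0 hrK h (mkIdx P hP)
    (Or.inl (by rw [loFin_mkIdx, hiFin_mkIdx]; exact hj))

/-- The `(a, a ± 1, a)` pattern is impossible, `ℕ`-indexed version. -/
lemma Wt_aba_nat {α : Fin n → K} {jj : Fin n → Fin r} (h : Wt (ζ := ζ) ρ α jj)
    (P : ℕ) (hP : P + 2 < n)
    (hj1 : jj ⟨P, by omega⟩ = jj ⟨P + 1, by omega⟩)
    (hj2 : jj ⟨P, by omega⟩ = jj ⟨P + 2, hP⟩)
    (ε : K) (hε : ε = 1 ∨ ε = -1)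
    (hstep : α ⟨P + 1, by omega⟩ = α ⟨P, by omega⟩ + ε) :
    α ⟨P + 2, hP⟩ ≠ α ⟨P, by omega⟩ := by
  have h1n : P + 1 < n := by omega
  refine Wt_aba ρ hζ hr0 hrK hsplit h2K h (mkIdx P h1n) (⟨P + 1, by omega⟩ : Fin (n - 1))
    rfl ?_ ?_ ε hε ?_
  · exact hj1
  · exact hj2
  · exact hstep

end Comb

end DegYH
namespace DegYH

section Comb2

variable {K : Type} [Field K] {r n : ℕ} {ζ : K}
variable {M : Type} [AddCommGroup M] [Module K M]
variable (ρ : DYH K r n →ₐ[K] Module.End K M)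

/-- The main combinatorial statement at "distance" `d`. -/
def MainStmt (d : ℕ) : Prop :=
  ∀ (α : Fin n → K) (jj : Fin n → Fin r), Wt (ζ := ζ) ρ α jj →
    ∀ i k : Fin n, i < k → k.1 - i.1 = d → jj i = jj k → α i = α k →
    ∀ s : K, s = 1 ∨ s = -1 →
    ∃ m : Fin n, i < m ∧ m < k ∧ jj m = jj i ∧ α m = α i + s

variable (hζ : IsPrimitiveRoot ζ r) (hr0 : 0 < r) (hrK : (r : K) ≠ 0)
variable (hsplit : SplittableRep K r n ρ) (h2K : (2 : K) ≠ 0)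

include hζ hr0 hrK hsplit h2K

/-- Descent ("bubbling down") step: an entry `c` sitting on top of an
arithmetic ladder leads to a contradiction. -/
lemma aux_descent (d : ℕ) (IH : ∀ d', d' < d → MainStmt (ζ := ζ) ρ d') :
    ∀ Q : ℕ, ∀ (α : Fin n → K) (jj : Fin n → Fin r), Wt (ζ := ζ) ρ α jj →
    ∀ (i k : Fin n) (ε c : K), (ε = 1 ∨ ε = -1) → i < k → k.1 - i.1 = d →
    (∀ m : Fin n, i < m → m < k → jj m = jj i) → jj i = jj k → α i = α k →
    (∀ m : Fin n, i < m → m < k → α m ≠ α i ∧ α m ≠ α i - ε) →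
    1 ≤ Q → i.1 + Q < k.1 →
    (∀ q : ℕ, q < Q → ∀ h : i.1 + q < n, α ⟨i.1 + q, h⟩ = α i + ε * q) →
    (∀ h : i.1 + Q < n, α ⟨i.1 + Q, h⟩ = c) →
    c ≠ α i + ε * Q → False := by
  intro Q
  induction Q using Nat.strong_induction_on with
  | _ Q IHQ =>
  intro α jj hW i k ε c hε hik hd hsameJ hjik hαik hInv hQ1 hQk hlad hc hcQ
  have hkn : k.1 < n := k.2
  have hQn : i.1 + Q < n := by omega
  have hsameJ' : ∀ m : Fin n, i ≤ m → m < k → jj m = jj i := fun m h1 h2 =>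
    (eq_or_lt_of_le h1).elim (fun h => by rw [← h]) (fun h => hsameJ m h h2)
  have hInvQ := hInv ⟨i.1 + Q, hQn⟩ (Fin.lt_def.mpr (by simp; omega))
    (Fin.lt_def.mpr (by simp; omega))
  have hcne0 : c ≠ α i := by rw [← hc hQn]; exact hInvQ.1
  have hcneε : c ≠ α i - ε := by rw [← hc hQn]; exact hInvQ.2
  have hcast : ((Q - 1 : ℕ) : K) = (Q : K) - 1 := by
    rw [Nat.cast_sub hQ1, Nat.cast_one]
  set L : K := α i + ε * ((Q : K) - 1) with hL
  have hQ1n : i.1 + (Q - 1) < n := by omega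
  have hLval : α ⟨i.1 + (Q - 1), hQ1n⟩ = L := by
    rw [hlad (Q - 1) (by omega) hQ1n, hcast]
  by_cases hcL : c = L
  · -- adjacent equal entries
    have hP1 : i.1 + (Q - 1) + 1 < n := by omega
    have hposQ : (⟨i.1 + (Q - 1) + 1, hP1⟩ : Fin n) = ⟨i.1 + Q, hQn⟩ := Fin.ext (by simp; omega)
    have hjP : jj ⟨i.1 + (Q - 1), by omega⟩ = jj ⟨i.1 + (Q - 1) + 1, hP1⟩ := by
      rw [hsameJ' ⟨i.1 + (Q - 1), by omega⟩ (Fin.le_def.mpr (by simp)) (Fin.lt_def.mpr (by simp; omega)),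
        hposQ, hsameJ' ⟨i.1 + Q, hQn⟩ (Fin.le_def.mpr (by simp)) (Fin.lt_def.mpr (by simp; omega))]
    refine Wt_adj_ne_nat ρ hζ hr0 hrK hsplit h2K hW (i.1 + (Q - 1)) hP1 hjP ?_
    rw [hposQ, hc hQn, hcL]
    exact hLval
  by_cases hcp : c = L + ε
  · exact hcQ (by rw [hcp, hL]; ring)
  by_cases hcm : c = L - ε
  · rcases Nat.lt_or_ge Q 2 with hQ2 | hQ2
    · -- Q = 1 : c = α i - ε, contradiction with the invariant
      have hQe : Q = 1 := by omega
      exact hcneε (by rw [hcm, hL, hQe]; push_cast; ring)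
    · -- Q ≥ 2 : the (a, a+ε, a) pattern
      have hcast2 : ((Q - 2 : ℕ) : K) = (Q : K) - 2 := by
        rw [Nat.cast_sub hQ2]; norm_num
      have hP2 : i.1 + (Q - 2) + 2 < n := by omega
      have e1 : (⟨i.1 + (Q - 2) + 1, by omega⟩ : Fin n) = ⟨i.1 + (Q - 1), hQ1n⟩ :=
        Fin.ext (by simp; omega)
      have e2 : (⟨i.1 + (Q - 2) + 2, hP2⟩ : Fin n) = ⟨i.1 + Q, hQn⟩ :=
        Fin.ext (by simp; omega)
      have hQ2n : i.1 + (Q - 2) < n := by omega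
      have hjq : ∀ (q : ℕ) (h : i.1 + q < n), q ≤ Q → jj ⟨i.1 + q, h⟩ = jj i := fun q h hq =>
        hsameJ' ⟨i.1 + q, h⟩ (Fin.le_def.mpr (by simp)) (Fin.lt_def.mpr (by simp; omega))
      refine absurd ?_ (Wt_aba_nat ρ hζ hr0 hrK hsplit h2K hW (i.1 + (Q - 2)) hP2 ?_ ?_ ε hε ?_)
      · -- α ⟨P+2⟩ = α ⟨P⟩
        rw [e2, hc hQn, hlad (Q - 2) (by omega) hQ2n, hcm, hL, hcast2]
        ring
      · rw [hjq (Q - 2) _ (by omega), e1, hjq (Q - 1) _ (by omega)]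
      · rw [hjq (Q - 2) _ (by omega), e2, hjq Q _ (by omega)]
      · rw [e1, hLval, hlad (Q - 2) (by omega) hQ2n, hL, hcast2]
        ring
  -- now c - L ∉ {0, 1, -1}
  have hd0 : c - L ≠ 0 := fun h => hcL (by linear_combination h)
  have hd1 : c - L ≠ 1 := by
    intro h
    rcases hε with he | he
    · exact hcp (by rw [he]; linear_combination h)
    · exact hcm (by rw [he]; linear_combination h)
  have hdm1 : c - L ≠ -1 := by
    intro h
    rcases hε with he | he
    · exact hcm (by rw [he]; linear_combination h)
    · exact hcp (by rw [he]; linear_combination h)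
  rcases Nat.lt_or_ge Q 2 with hQ2 | hQ2
  · -- Q = 1 : swap at i and use the main induction hypothesis at distance d-1
    have hQe : Q = 1 := by omega
    subst hQe
    have hiP : i.1 + 1 < n := by omega
    have hi_eq : (⟨i.1, by omega⟩ : Fin n) = i := Fin.ext rfl
    have hLi : L = α i := by rw [hL]; push_cast; ring
    have hj0 : jj ⟨i.1, by omega⟩ = jj ⟨i.1 + 1, hiP⟩ := by
      rw [hi_eq, hsameJ' ⟨i.1 + 1, hiP⟩ (Fin.le_def.mpr (by simp)) (Fin.lt_def.mpr (by simp; omega))]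
    have ha0 : α ⟨i.1 + 1, hiP⟩ - α ⟨i.1, Nat.lt_of_succ_lt hiP⟩ ≠ 0 := by
      rw [hi_eq, hc hiP]; intro hcon; exact hd0 (by rw [hLi]; linear_combination hcon)
    have ha1 : α ⟨i.1 + 1, hiP⟩ - α ⟨i.1, Nat.lt_of_succ_lt hiP⟩ ≠ 1 := by
      rw [hi_eq, hc hiP]; intro hcon; exact hd1 (by rw [hLi]; linear_combination hcon)
    have ham1 : α ⟨i.1 + 1, hiP⟩ - α ⟨i.1, Nat.lt_of_succ_lt hiP⟩ ≠ -1 := by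
      rw [hi_eq, hc hiP]; intro hcon; exact hdm1 (by rw [hLi]; linear_combination hcon)
    have hWs := Wt_swap_nat_jeq ρ hζ hr0 hrK hsplit h2K hW i.1 hiP hj0 ha0 ha1 ham1
    set α' := swapWt (mkIdx i.1 hiP) α with hα'
    have hα'i1 : α' ⟨i.1 + 1, hiP⟩ = α i := by
      rw [hα', swapWt_mk_hi i.1 hiP α _ rfl, hi_eq]
    have hα'k : α' k = α k := by
      rw [hα', swapWt_mk_ne i.1 hiP α k (by omega) (by omega)]
    have hms : (-ε = 1 ∨ -ε = -1) := by
      rcases hε with he | he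
      · right; rw [he]
      · left; rw [he]; ring
    obtain ⟨m, hm1, hm2, hmj, hmα⟩ := IH (d - 1) (by omega) α' jj hWs ⟨i.1 + 1, hiP⟩ k
      (Fin.lt_def.mpr (by simp; omega)) (by simp; omega)
      (by rw [hsameJ' ⟨i.1 + 1, hiP⟩ (Fin.le_def.mpr (by simp)) (Fin.lt_def.mpr (by simp; omega)),
        hjik])
      (by rw [hα'i1, hα'k, hαik]) (-ε) hms
    have hm1' : i.1 + 1 < m.1 := Fin.lt_def.mp hm1
    have hα'm : α' m = α m := by
      rw [hα', swapWt_mk_ne i.1 hiP α m (by omega) (by omega)]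
    rw [hα'm, hα'i1] at hmα
    exact (hInv m (Fin.lt_def.mpr (by omega)) hm2).2 (by rw [hmα]; ring)
  · -- Q ≥ 2 : swap at i + (Q-1) and recurse with Q - 1
    have hswPn : i.1 + (Q - 1) + 1 < n := by omega
    have hposQ : (⟨i.1 + (Q - 1) + 1, hswPn⟩ : Fin n) = ⟨i.1 + Q, hQn⟩ :=
      Fin.ext (by simp; omega)
    have hjsw : jj ⟨i.1 + (Q - 1), by omega⟩ = jj ⟨i.1 + (Q - 1) + 1, hswPn⟩ := by
      rw [hsameJ' ⟨i.1 + (Q - 1), by omega⟩ (Fin.le_def.mpr (by simp)) (Fin.lt_def.mpr (by simp; omega)),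
        hposQ, hsameJ' ⟨i.1 + Q, hQn⟩ (Fin.le_def.mpr (by simp)) (Fin.lt_def.mpr (by simp; omega))]
    have hdiff' : α ⟨i.1 + (Q - 1) + 1, hswPn⟩ - α ⟨i.1 + (Q - 1), Nat.lt_of_succ_lt hswPn⟩ = c - L := by
      rw [hposQ, hc hQn]
      have hLv : α (⟨i.1 + (Q - 1), Nat.lt_of_succ_lt hswPn⟩ : Fin n) = L := hLval
      rw [hLv]
    have ha0 : α ⟨i.1 + (Q - 1) + 1, hswPn⟩ - α ⟨i.1 + (Q - 1), Nat.lt_of_succ_lt hswPn⟩ ≠ 0 := by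
      rw [hdiff']; exact hd0
    have ha1 : α ⟨i.1 + (Q - 1) + 1, hswPn⟩ - α ⟨i.1 + (Q - 1), Nat.lt_of_succ_lt hswPn⟩ ≠ 1 := by
      rw [hdiff']; exact hd1
    have ham1 : α ⟨i.1 + (Q - 1) + 1, hswPn⟩ - α ⟨i.1 + (Q - 1), Nat.lt_of_succ_lt hswPn⟩ ≠ -1 := by
      rw [hdiff']; exact hdm1
    have hWs := Wt_swap_nat_jeq ρ hζ hr0 hrK hsplit h2K hW (i.1 + (Q - 1)) hswPn hjsw ha0 ha1 ham1
    set α' := swapWt (mkIdx (i.1 + (Q - 1)) hswPn) α with hα'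
    have hα'i : α' i = α i := by
      rw [hα', swapWt_mk_ne _ hswPn α i (by omega) (by omega)]
    have hα'k : α' k = α k := by
      rw [hα', swapWt_mk_ne _ hswPn α k (by omega) (by omega)]
    have hα'P : ∀ h : i.1 + (Q - 1) < n, α' ⟨i.1 + (Q - 1), h⟩ = c := by
      intro h
      rw [hα', swapWt_mk_lo _ hswPn α _ rfl, hposQ, hc hQn]
    refine IHQ (Q - 1) (by omega) α' jj hWs i k ε c hε hik hd hsameJ hjik
      (by rw [hα'i, hα'k, hαik]) ?_ (by omega) (by omega) ?_ ?_ ?_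
    · -- invariant for α'
      intro m hm1 hm2
      rw [hα'i]
      by_cases hmP : m.1 = i.1 + (Q - 1)
      · rw [hα', swapWt_mk_lo _ hswPn α m hmP, hposQ, hc hQn]
        exact ⟨hcne0, hcneε⟩
      · by_cases hmP1 : m.1 = i.1 + (Q - 1) + 1
        · rw [hα', swapWt_mk_hi _ hswPn α m hmP1]
          exact hInv ⟨i.1 + (Q - 1), Nat.lt_of_succ_lt hswPn⟩
            (Fin.lt_def.mpr (by simp; omega)) (Fin.lt_def.mpr (by simp; omega))
        · rw [hα', swapWt_mk_ne _ hswPn α m hmP hmP1]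
          exact hInv m hm1 hm2
    · -- ladder below Q - 1
      intro q hq h
      rw [hα'i, hα', swapWt_mk_ne _ hswPn α _ (by simp; omega) (by simp; omega)]
      exact hlad q (by omega) h
    · -- value at i + (Q-1)
      intro h
      exact hα'P h
    · -- c differs from the ladder value at Q - 1
      rw [hα'i, hcast]
      exact fun hcon => hcL (by rw [hL]; linear_combination hcon)

end Comb2

end DegYH
namespace DegYH

section Comb3

variable {K : Type} [Field K] {r n : ℕ} {ζ : K}
variable {M : Type} [AddCommGroup M] [Module K M]
variable (ρ : DYH K r n →ₐ[K] Module.End K M)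
variable (hζ : IsPrimitiveRoot ζ r) (hr0 : 0 < r) (hrK : (r : K) ≠ 0)
variable (hsplit : SplittableRep K r n ρ) (h2K : (2 : K) ≠ 0)

include hζ hr0 hrK hsplit h2K

/-- Bubbling: a strictly "monotone ladder" starting at `i` inside a window with
equal endpoints and no interior value equal to `α i` or `α i - ε` is impossible. -/
lemma aux_bubble (d : ℕ) (IH : ∀ d', d' < d → MainStmt (ζ := ζ) ρ d') :
    ∀ g : ℕ, ∀ (α : Fin n → K) (jj : Fin n → Fin r), Wt (ζ := ζ) ρ α jj →
    ∀ (i k : Fin n) (ε : K), (ε = 1 ∨ ε = -1) → i < k → k.1 - i.1 = d →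
    (∀ m : Fin n, i < m → m < k → jj m = jj i) → jj i = jj k → α i = α k →
    (∀ m : Fin n, i < m → m < k → α m ≠ α i ∧ α m ≠ α i - ε) →
    ∀ t : ℕ, 1 ≤ t → i.1 + t < k.1 → k.1 - (i.1 + t) = g →
    (∀ q : ℕ, q ≤ t → ∀ h : i.1 + q < n, α ⟨i.1 + q, h⟩ = α i + ε * q) →
    False := by
  intro g
  induction g using Nat.strong_induction_on with
  | _ g IHg =>
  intro α jj hW i k ε hε hik hd hsameJ hjik hαik hInv t ht1 htk hg hlad
  have hkn : k.1 < n := k.2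
  have htn : i.1 + t < n := by omega
  have hsameJ' : ∀ m : Fin n, i ≤ m → m < k → jj m = jj i := fun m h1 h2 =>
    (eq_or_lt_of_le h1).elim (fun h => by rw [← h]) (fun h => hsameJ m h h2)
  have hInvT := hInv ⟨i.1 + t, htn⟩ (Fin.lt_def.mpr (by simp; omega))
    (Fin.lt_def.mpr (by simp; omega))
  by_cases hPk : i.1 + t + 1 = k.1
  · rcases Nat.lt_or_ge t 2 with ht2 | ht2
    · -- t = 1: the pattern (a, a+ε, a) on consecutive positions
      have hte : t = 1 := by omega
      subst hte
      have hP2 : i.1 + 2 < n := by omega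
      have e2 : (⟨i.1 + 2, hP2⟩ : Fin n) = k := Fin.ext (by simp; omega)
      have e0 : (⟨i.1, Nat.lt_of_succ_lt (Nat.lt_of_succ_lt hP2)⟩ : Fin n) = i := Fin.ext rfl
      refine absurd ?_ (Wt_aba_nat ρ hζ hr0 hrK hsplit h2K hW i.1 hP2 ?_ ?_ ε hε ?_)
      · rw [e2, e0, hαik]
      · rw [e0, hsameJ' ⟨i.1 + 1, by omega⟩ (Fin.le_def.mpr (by simp; try omega)) (Fin.lt_def.mpr (by simp; omega))]
      · rw [e0, e2, hjik]
      · rw [e0, hlad 1 le_rfl (by omega)]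
        push_cast; ring
    · -- t ≥ 2: swap at the right end, reducing the distance to t
      have hPn1 : i.1 + t + 1 < n := by omega
      have ek : (⟨i.1 + t + 1, hPn1⟩ : Fin n) = k := Fin.ext (by simp; omega)
      have hc1 : ((t - 1 : ℕ) : K) = (t : K) - 1 := by
        rw [Nat.cast_sub ht1, Nat.cast_one]
      have hItm := hInv ⟨i.1 + (t - 1), by omega⟩ (Fin.lt_def.mpr (by simp; omega))
        (Fin.lt_def.mpr (by simp; omega))
      have ha0 : α ⟨i.1 + t + 1, hPn1⟩ - α ⟨i.1 + t, Nat.lt_of_succ_lt hPn1⟩ ≠ 0 := by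
        rw [ek]
        intro hcon
        exact hInvT.1 (by linear_combination -hcon - hαik)
      have ha1 : α ⟨i.1 + t + 1, hPn1⟩ - α ⟨i.1 + t, Nat.lt_of_succ_lt hPn1⟩ ≠ 1 := by
        rw [ek, hlad t le_rfl htn]
        intro hcon
        rcases hε with he | he
        · refine hInvT.2 ?_
          rw [hlad t le_rfl htn, he]
          rw [he] at hcon
          linear_combination -hcon - hαik
        · refine hItm.1 ?_
          rw [hlad (t - 1) (by omega) (by omega), hc1, he]
          rw [he] at hcon
          linear_combination -hcon - hαik
      have ham1 : α ⟨i.1 + t + 1, hPn1⟩ - α ⟨i.1 + t, Nat.lt_of_succ_lt hPn1⟩ ≠ -1 := by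
        rw [ek, hlad t le_rfl htn]
        intro hcon
        rcases hε with he | he
        · refine hItm.1 ?_
          rw [hlad (t - 1) (by omega) (by omega), hc1, he]
          rw [he] at hcon
          linear_combination -hcon - hαik
        · refine hInvT.2 ?_
          rw [hlad t le_rfl htn, he]
          rw [he] at hcon
          linear_combination -hcon - hαik
      have hjsw : jj ⟨i.1 + t, by omega⟩ = jj ⟨i.1 + t + 1, hPn1⟩ := by
        rw [hsameJ' ⟨i.1 + t, by omega⟩ (Fin.le_def.mpr (by simp; try omega)) (Fin.lt_def.mpr (by simp; omega)),
          ek, hjik]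
      have hWs := Wt_swap_nat_jeq ρ hζ hr0 hrK hsplit h2K hW (i.1 + t) hPn1 hjsw ha0 ha1 ham1
      set α' := swapWt (mkIdx (i.1 + t) hPn1) α with hα'
      have hα'i : α' i = α i := by
        rw [hα', swapWt_mk_ne _ hPn1 α i (by omega) (by omega)]
      have hα'T : α' ⟨i.1 + t, htn⟩ = α i := by
        rw [hα', swapWt_mk_lo _ hPn1 α _ rfl, ek, hαik]
      have hms : (-ε = 1 ∨ -ε = -1) := by
        rcases hε with he | he
        · right; rw [he]
        · left; rw [he]; ring
      obtain ⟨m, hm1, hm2, hmj, hmα⟩ := IH t (by omega) α' jj hWs i ⟨i.1 + t, htn⟩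
        (Fin.lt_def.mpr (by simp; omega)) (by simp)
        (hsameJ' ⟨i.1 + t, htn⟩ (Fin.le_def.mpr (by simp; try omega)) (Fin.lt_def.mpr (by simp; omega))).symm
        (by rw [hα'i, hα'T]) (-ε) hms
      have hm1' : i.1 < m.1 := Fin.lt_def.mp hm1
      have hm2' : m.1 < i.1 + t := Fin.lt_def.mp hm2
      have hα'm : α' m = α m := by
        rw [hα', swapWt_mk_ne _ hPn1 α m (by omega) (by omega)]
      rw [hα'm, hα'i] at hmα
      exact (hInv m hm1 (Fin.lt_def.mpr (by omega))).2 (by rw [hmα]; ring)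
  · -- i + t + 1 < k : analyze the next entry
    have hPn1 : i.1 + t + 1 < n := by omega
    set c := α ⟨i.1 + t + 1, hPn1⟩ with hcdef
    have hInvP := hInv ⟨i.1 + t + 1, hPn1⟩ (Fin.lt_def.mpr (by simp))
      (Fin.lt_def.mpr (by simp; omega))
    by_cases hc2 : c = α i + ε * ((t : K) + 1)
    · -- extend the ladder
      refine IHg (k.1 - (i.1 + t + 1)) (by omega) α jj hW i k ε hε hik hd hsameJ hjik hαik hInv
        (t + 1) (by omega) (by omega) (by omega) ?_
      intro q hq h
      rcases Nat.lt_or_ge q (t + 1) with hq' | hq'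
      · exact hlad q (by omega) h
      · have hqe : q = t + 1 := by omega
        subst hqe
        have : (⟨i.1 + (t + 1), h⟩ : Fin n) = ⟨i.1 + t + 1, hPn1⟩ := Fin.ext (by simp; omega)
        rw [this, ← hcdef, hc2]
        push_cast; ring
    by_cases hc3 : c = α i + ε * t
    · -- adjacent equal entries at i+t, i+t+1
      refine absurd ?_ (Wt_adj_ne_nat ρ hζ hr0 hrK hsplit h2K hW (i.1 + t) hPn1 ?_)
      · rw [hlad t le_rfl (Nat.lt_of_succ_lt hPn1)]
        rw [show α (⟨i.1 + t + 1, hPn1⟩ : Fin n) = c from rfl, hc3]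
      · rw [hsameJ' ⟨i.1 + t, by omega⟩ (Fin.le_def.mpr (by simp; try omega)) (Fin.lt_def.mpr (by simp; omega)),
          hsameJ' ⟨i.1 + t + 1, hPn1⟩ (Fin.le_def.mpr (by simp; try omega)) (Fin.lt_def.mpr (by simp; omega))]
    by_cases hc4 : c = α i + ε * ((t : K) - 1)
    · rcases Nat.lt_or_ge t 2 with ht2 | ht2
      · -- t = 1 : c = α i, contradiction
        have hte : t = 1 := by omega
        refine hInvP.1 ?_
        rw [← hcdef, hc4, hte]
        push_cast; ring
      · -- the pattern (a, a+ε, a) at positions i+t-1, i+t, i+t+1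
        have hc1 : ((t - 1 : ℕ) : K) = (t : K) - 1 := by
          rw [Nat.cast_sub ht1, Nat.cast_one]
        have hP2 : i.1 + (t - 1) + 2 < n := by omega
        have e1 : (⟨i.1 + (t - 1) + 1, by omega⟩ : Fin n) = ⟨i.1 + t, by omega⟩ :=
          Fin.ext (by simp; omega)
        have e2 : (⟨i.1 + (t - 1) + 2, hP2⟩ : Fin n) = ⟨i.1 + t + 1, hPn1⟩ :=
          Fin.ext (by simp; omega)
        refine absurd ?_ (Wt_aba_nat ρ hζ hr0 hrK hsplit h2K hW (i.1 + (t - 1)) hP2 ?_ ?_ ε hε ?_)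
        · rw [e2, ← hcdef, hc4, hlad (t - 1) (by omega) (by omega), hc1]
        · rw [hsameJ' ⟨i.1 + (t - 1), by omega⟩ (Fin.le_def.mpr (by simp; try omega)) (Fin.lt_def.mpr (by simp; omega)),
            e1, hsameJ' ⟨i.1 + t, by omega⟩ (Fin.le_def.mpr (by simp; try omega)) (Fin.lt_def.mpr (by simp; omega))]
        · rw [hsameJ' ⟨i.1 + (t - 1), by omega⟩ (Fin.le_def.mpr (by simp; try omega)) (Fin.lt_def.mpr (by simp; omega)),
            e2, hsameJ' ⟨i.1 + t + 1, hPn1⟩ (Fin.le_def.mpr (by simp; try omega)) (Fin.lt_def.mpr (by simp; omega))]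
        · rw [e1, hlad t le_rfl (by omega), hlad (t - 1) (by omega) (by omega), hc1]
          ring
    -- now swap c down to position i+t and run the descent
    have ha0 : α ⟨i.1 + t + 1, hPn1⟩ - α ⟨i.1 + t, Nat.lt_of_succ_lt hPn1⟩ ≠ 0 := by
      rw [← hcdef, hlad t le_rfl (Nat.lt_of_succ_lt hPn1)]
      intro hcon
      exact hc3 (by linear_combination hcon)
    have ha1 : α ⟨i.1 + t + 1, hPn1⟩ - α ⟨i.1 + t, Nat.lt_of_succ_lt hPn1⟩ ≠ 1 := by
      rw [← hcdef, hlad t le_rfl (Nat.lt_of_succ_lt hPn1)]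
      intro hcon
      rcases hε with he | he
      · refine hc2 ?_
        rw [he] at hcon ⊢
        linear_combination hcon
      · refine hc4 ?_
        rw [he] at hcon ⊢
        linear_combination hcon
    have ham1 : α ⟨i.1 + t + 1, hPn1⟩ - α ⟨i.1 + t, Nat.lt_of_succ_lt hPn1⟩ ≠ -1 := by
      rw [← hcdef, hlad t le_rfl (Nat.lt_of_succ_lt hPn1)]
      intro hcon
      rcases hε with he | he
      · refine hc4 ?_
        rw [he] at hcon ⊢
        linear_combination hcon
      · refine hc2 ?_
        rw [he] at hcon ⊢
        linear_combination hcon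
    have hjsw : jj ⟨i.1 + t, by omega⟩ = jj ⟨i.1 + t + 1, hPn1⟩ := by
      rw [hsameJ' ⟨i.1 + t, by omega⟩ (Fin.le_def.mpr (by simp; try omega)) (Fin.lt_def.mpr (by simp; omega)),
        hsameJ' ⟨i.1 + t + 1, hPn1⟩ (Fin.le_def.mpr (by simp; try omega)) (Fin.lt_def.mpr (by simp; omega))]
    have hWs := Wt_swap_nat_jeq ρ hζ hr0 hrK hsplit h2K hW (i.1 + t) hPn1 hjsw ha0 ha1 ham1
    set α' := swapWt (mkIdx (i.1 + t) hPn1) α with hα'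
    have hα'i : α' i = α i := by
      rw [hα', swapWt_mk_ne _ hPn1 α i (by omega) (by omega)]
    have hα'k : α' k = α k := by
      rw [hα', swapWt_mk_ne _ hPn1 α k (by omega) (by omega)]
    refine aux_descent ρ hζ hr0 hrK hsplit h2K d IH t α' jj hWs i k ε c hε hik hd hsameJ hjik
      (by rw [hα'i, hα'k, hαik]) ?_ ht1 (by omega) ?_ ?_ ?_
    · -- invariant
      intro m hm1 hm2
      rw [hα'i]
      by_cases hmP : m.1 = i.1 + t
      · rw [hα', swapWt_mk_lo _ hPn1 α m hmP]
        exact ⟨hInvP.1, hInvP.2⟩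
      · by_cases hmP1 : m.1 = i.1 + t + 1
        · rw [hα', swapWt_mk_hi _ hPn1 α m hmP1]
          exact hInv ⟨i.1 + t, Nat.lt_of_succ_lt hPn1⟩
            (Fin.lt_def.mpr (by simp; omega)) (Fin.lt_def.mpr (by simp; omega))
        · rw [hα', swapWt_mk_ne _ hPn1 α m hmP hmP1]
          exact hInv m hm1 hm2
    · -- ladder below t
      intro q hq h
      rw [hα'i, hα', swapWt_mk_ne _ hPn1 α _ (by simp; omega) (by simp; omega)]
      exact hlad q (by omega) h
    · -- value at i + t
      intro h
      rw [hα', swapWt_mk_lo _ hPn1 α _ rfl, ← hcdef]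
    · -- c differs from the ladder value at t
      rw [hα'i]
      exact hc3

end Comb3

end DegYH
namespace DegYH

section Comb4

variable {K : Type} [Field K] {r n : ℕ} {ζ : K}
variable {M : Type} [AddCommGroup M] [Module K M]
variable (ρ : DYH K r n →ₐ[K] Module.End K M)
variable (hζ : IsPrimitiveRoot ζ r) (hr0 : 0 < r) (hrK : (r : K) ≠ 0)
variable (hsplit : SplittableRep K r n ρ) (h2K : (2 : K) ≠ 0)

include hζ hr0 hrK hsplit h2K

/-- Removal of an entry with a different `t`-eigenvalue from the window. -/
lemma aux_removal (d : ℕ) (IH : ∀ d', d' < d → MainStmt (ζ := ζ) ρ d') :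
    ∀ e : ℕ, ∀ (α : Fin n → K) (jj : Fin n → Fin r), Wt (ζ := ζ) ρ α jj →
    ∀ i k : Fin n, i < k → k.1 - i.1 = d → jj i = jj k → α i = α k →
    ∀ m : Fin n, i < m → m < k → jj m ≠ jj i →
    (∀ m' : Fin n, i < m' → m'.1 < m.1 → jj m' = jj i) →
    m.1 - i.1 = e →
    ∀ s : K, s = 1 ∨ s = -1 →
    ∃ m' : Fin n, i < m' ∧ m' < k ∧ jj m' = jj i ∧ α m' = α i + s := by
  intro e
  induction e using Nat.strong_induction_on with
  | _ e IHe =>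
  intro α jj hW i k hik hd hjik hαik m hm1 hm2 hmj hbelow he s hs
  have hkn : k.1 < n := k.2
  have hmk : m.1 < k.1 := Fin.lt_def.mp hm2
  have him : i.1 < m.1 := Fin.lt_def.mp hm1
  by_cases he1 : m.1 = i.1 + 1
  · -- the defect sits right next to `i`: swap at `i`
    have hiP : i.1 + 1 < n := by omega
    have hmeq : m = ⟨i.1 + 1, hiP⟩ := Fin.ext he1
    have e0 : (⟨i.1, Nat.lt_of_succ_lt hiP⟩ : Fin n) = i := Fin.ext rfl
    have hjne : jj ⟨i.1, Nat.lt_of_succ_lt hiP⟩ ≠ jj ⟨i.1 + 1, hiP⟩ := by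
      rw [e0, ← hmeq]; exact fun h => hmj h.symm
    have hWs := Wt_swap_nat_jne ρ hζ hr0 hrK hsplit h2K hW i.1 hiP hjne
    set α' := swapWt (mkIdx i.1 hiP) α with hα'
    set jj' := swapWt (mkIdx i.1 hiP) jj with hjj'
    have hji1 : jj' ⟨i.1 + 1, hiP⟩ = jj i := by
      rw [hjj', swapWt_mk_hi _ hiP jj _ rfl, e0]
    have hαi1 : α' ⟨i.1 + 1, hiP⟩ = α i := by
      rw [hα', swapWt_mk_hi _ hiP α _ rfl, e0]
    have hkne1 : k.1 ≠ i.1 := by omega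
    have hkne2 : k.1 ≠ i.1 + 1 := by omega
    have hjk : jj' k = jj k := by
      rw [hjj', swapWt_mk_ne _ hiP jj k hkne1 hkne2]
    have hαk : α' k = α k := by
      rw [hα', swapWt_mk_ne _ hiP α k hkne1 hkne2]
    obtain ⟨m', g1, g2, g3, g4⟩ := IH (d - 1) (by omega) α' jj' hWs ⟨i.1 + 1, hiP⟩ k
      (Fin.lt_def.mpr (by simp; omega)) (by simp; omega)
      (by rw [hji1, hjk, hjik]) (by rw [hαi1, hαk, hαik]) s hs
    have hg1 : i.1 + 1 < m'.1 := Fin.lt_def.mp g1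
    have hjm' : jj' m' = jj m' := by
      rw [hjj', swapWt_mk_ne _ hiP jj m' (by omega) (by omega)]
    have hαm' : α' m' = α m' := by
      rw [hα', swapWt_mk_ne _ hiP α m' (by omega) (by omega)]
    refine ⟨m', Fin.lt_def.mpr (by omega), g2, ?_, ?_⟩
    · rw [← hjm', g3, hji1]
    · rw [← hαm', g4, hαi1]
  · -- the defect is further away: swap at m-1
    have hPn : (m.1 - 1) + 1 < n := by omega
    have hmm : (⟨m.1 - 1 + 1, hPn⟩ : Fin n) = m := Fin.ext (by simp; omega)
    have hm0n : m.1 - 1 < n := Nat.lt_of_succ_lt hPn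
    have hjlo : jj ⟨m.1 - 1, hm0n⟩ = jj i :=
      hbelow ⟨m.1 - 1, hm0n⟩ (Fin.lt_def.mpr (by simp; omega)) (by simp; omega)
    have hjne : jj ⟨m.1 - 1, hm0n⟩ ≠ jj ⟨m.1 - 1 + 1, hPn⟩ := by
      rw [hjlo, hmm]; exact fun h => hmj h.symm
    have hWs := Wt_swap_nat_jne ρ hζ hr0 hrK hsplit h2K hW (m.1 - 1) hPn hjne
    set α' := swapWt (mkIdx (m.1 - 1) hPn) α with hα'
    set jj' := swapWt (mkIdx (m.1 - 1) hPn) jj with hjj'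
    have hine1 : i.1 ≠ m.1 - 1 := by omega
    have hine2 : i.1 ≠ m.1 - 1 + 1 := by omega
    have hkne1 : k.1 ≠ m.1 - 1 := by omega
    have hkne2 : k.1 ≠ m.1 - 1 + 1 := by omega
    have hji' : jj' i = jj i := by rw [hjj', swapWt_mk_ne _ hPn jj i hine1 hine2]
    have hαi' : α' i = α i := by rw [hα', swapWt_mk_ne _ hPn α i hine1 hine2]
    have hjk' : jj' k = jj k := by rw [hjj', swapWt_mk_ne _ hPn jj k hkne1 hkne2]
    have hαk' : α' k = α k := by rw [hα', swapWt_mk_ne _ hPn α k hkne1 hkne2]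
    have hjm0 : jj' ⟨m.1 - 1, hm0n⟩ = jj m := by
      rw [hjj', swapWt_mk_lo _ hPn jj _ rfl, hmm]
    have hbelow' : ∀ m'' : Fin n, i < m'' → m''.1 < m.1 - 1 → jj' m'' = jj' i := by
      intro m'' hi'' hlt2
      rw [hji', hjj', swapWt_mk_ne _ hPn jj m'' (by omega) (by omega)]
      exact hbelow m'' hi'' (by omega)
    obtain ⟨m', g1, g2, g3, g4⟩ := IHe (e - 1) (by omega) α' jj' hWs i k hik hd
      (by rw [hji', hjk', hjik]) (by rw [hαi', hαk', hαik]) ⟨m.1 - 1, hm0n⟩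
      (Fin.lt_def.mpr (by simp; omega)) (Fin.lt_def.mpr (by simp; omega))
      (by rw [hjm0, hji']; exact hmj) hbelow' (by simp; omega) s hs
    -- transfer the witness back
    by_cases hm'lo : m'.1 = m.1 - 1
    · exfalso
      rw [hji'] at g3
      have : jj' m' = jj m := by
        have : m' = (⟨m.1 - 1, hm0n⟩ : Fin n) := Fin.ext hm'lo
        rw [this, hjm0]
      rw [this] at g3
      exact hmj g3
    · by_cases hm'hi : m'.1 = m.1 - 1 + 1
      · refine ⟨⟨m.1 - 1, hm0n⟩, Fin.lt_def.mpr (by simp; omega), Fin.lt_def.mpr (by simp; omega),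
          hjlo, ?_⟩
        have hα'm : α' m' = α ⟨m.1 - 1, hm0n⟩ := by
          rw [hα', swapWt_mk_hi _ hPn α m' hm'hi]
        rw [← hα'm, g4, hαi']
      · have hjm' : jj' m' = jj m' := by
          rw [hjj', swapWt_mk_ne _ hPn jj m' hm'lo hm'hi]
        have hαm' : α' m' = α m' := by
          rw [hα', swapWt_mk_ne _ hPn α m' hm'lo hm'hi]
        refine ⟨m', g1, g2, ?_, ?_⟩
        · rw [← hjm', g3, hji']
        · rw [← hαm', g4, hαi']

/-- The main combinatorial induction. -/
lemma comb_main (d : ℕ) : MainStmt (ζ := ζ) ρ d := by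
  induction d using Nat.strong_induction_on with
  | _ d IH =>
  intro α jj hW i k hik hd hjik hαik s hs
  have hkn : k.1 < n := k.2
  have hika : i.1 < k.1 := Fin.lt_def.mp hik
  by_cases hA : ∃ m : Fin n, i < m ∧ m < k ∧ jj m = jj i ∧ α m = α i
  · obtain ⟨m, h1, h2, h3, h4⟩ := hA
    obtain ⟨m', g1, g2, g3, g4⟩ := IH (m.1 - i.1)
      (by have := Fin.lt_def.mp h2; have := Fin.lt_def.mp h1; omega)
      α jj hW i m h1 rfl h3.symm h4.symm s hs
    exact ⟨m', g1, lt_trans g2 h2, g3, g4⟩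
  by_cases hd1 : d = 1
  · -- adjacent equal entries: impossible
    subst hd1
    have hiP : i.1 + 1 < n := by omega
    have ek : (⟨i.1 + 1, hiP⟩ : Fin n) = k := Fin.ext (by simp; omega)
    have e0 : (⟨i.1, Nat.lt_of_succ_lt hiP⟩ : Fin n) = i := Fin.ext rfl
    exact absurd (by rw [e0, ek]; exact hαik)
      (Wt_adj_ne_nat ρ hζ hr0 hrK hsplit h2K hW i.1 hiP (by rw [e0, ek]; exact hjik))
  -- now d ≥ 2
  have hd2 : 2 ≤ d := by omega
  by_cases hB : ∃ m : Fin n, i < m ∧ m < k ∧ jj m ≠ jj i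
  · -- there is a defect; pick a lowest one and remove it
    classical
    have hex : ∃ v : ℕ, ∃ hv : v < n, i < (⟨v, hv⟩ : Fin n) ∧ (⟨v, hv⟩ : Fin n) < k ∧
        jj ⟨v, hv⟩ ≠ jj i := by
      obtain ⟨m, h1, h2, h3⟩ := hB
      exact ⟨m.1, m.2, by simpa using h1, by simpa using h2, by simpa using h3⟩
    set v0 := Nat.find hex with hv0
    obtain ⟨hv, hv1, hv2, hv3⟩ := Nat.find_spec hex
    refine aux_removal ρ hζ hr0 hrK hsplit h2K d IH (v0 - i.1) α jj hW i k hik hd hjik hαik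
      ⟨v0, hv⟩ hv1 hv2 hv3 ?_ rfl s hs
    intro m' hi' hlt'
    by_contra hc
    have hlt2 : m'.1 < v0 := hlt'
    refine Nat.find_min hex hlt2 ⟨m'.2, ?_, ?_, ?_⟩
    · rw [Fin.eta]; exact hi'
    · rw [Fin.eta]; exact lt_trans (show m' < (⟨v0, hv⟩ : Fin n) from Fin.lt_def.mpr hlt2) hv2
    · rw [Fin.eta]; exact hc
  · -- all interior entries have the same `t`-eigenvalue
    have hsameJ : ∀ m : Fin n, i < m → m < k → jj m = jj i := fun m h1 h2 =>
      not_not.mp (fun hc => hB ⟨m, h1, h2, hc⟩)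
    have hA' : ∀ m : Fin n, i < m → m < k → α m ≠ α i := fun m h1 h2 hc =>
      hA ⟨m, h1, h2, hsameJ m h1 h2, hc⟩
    have hi1n : i.1 + 1 < n := by omega
    set i1 : Fin n := ⟨i.1 + 1, hi1n⟩ with hi1def
    have hi1a : i < i1 := Fin.lt_def.mpr (show i.1 < i.1 + 1 by omega)
    have hi1b : i1 < k := Fin.lt_def.mpr (show i.1 + 1 < k.1 by omega)
    have hji1 : jj i1 = jj i := hsameJ i1 hi1a hi1b
    set ε := α i1 - α i with hεdef
    have hε0 : ε ≠ 0 := fun h => hA' i1 hi1a hi1b (by linear_combination h)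
    by_cases hεs : ε = s
    · exact ⟨i1, hi1a, hi1b, hji1, by rw [← hεs, hεdef]; ring⟩
    by_cases hε1 : ε = 1 ∨ ε = -1
    · -- ε = -s; suppose no interior entry equals α i + s and bubble
      by_contra hno
      have hεms : ε = -s := by
        rcases hε1 with h | h <;> rcases hs with h' | h'
        · exact absurd (h.trans h'.symm) hεs
        · rw [h, h']; try ring
        · rw [h, h']; try ring
        · exact absurd (h.trans h'.symm) hεs
      have hInv : ∀ m : Fin n, i < m → m < k → α m ≠ α i ∧ α m ≠ α i - ε := by
        intro m h1 h2
        refine ⟨hA' m h1 h2, fun hc => hno ⟨m, h1, h2, hsameJ m h1 h2, ?_⟩⟩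
        rw [hc, hεms]; ring
      refine aux_bubble ρ hζ hr0 hrK hsplit h2K d IH (k.1 - (i.1 + 1)) α jj hW i k ε hε1
        hik hd hsameJ hjik hαik hInv 1 le_rfl (by omega) rfl ?_
      intro q hq h
      rcases Nat.le_one_iff_eq_zero_or_eq_one.mp hq with h0 | h1
      · subst h0
        have : (⟨i.1 + 0, h⟩ : Fin n) = i := Fin.ext (by simp)
        rw [this]
        push_cast; ring
      · subst h1
        have : (⟨i.1 + 1, h⟩ : Fin n) = i1 := Fin.ext rfl
        rw [this]
        push_cast
        rw [hεdef]; ring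
    · -- swap at i and use the induction hypothesis at distance d-1
      have e0 : (⟨i.1, Nat.lt_of_succ_lt hi1n⟩ : Fin n) = i := Fin.ext rfl
      have e1 : (⟨i.1 + 1, hi1n⟩ : Fin n) = i1 := Fin.ext rfl
      rw [not_or] at hε1
      have ha0 : α ⟨i.1 + 1, hi1n⟩ - α ⟨i.1, Nat.lt_of_succ_lt hi1n⟩ ≠ 0 := by
        rw [e0, e1, ← hεdef]; exact hε0
      have ha1 : α ⟨i.1 + 1, hi1n⟩ - α ⟨i.1, Nat.lt_of_succ_lt hi1n⟩ ≠ 1 := by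
        rw [e0, e1, ← hεdef]; exact hε1.1
      have ham1 : α ⟨i.1 + 1, hi1n⟩ - α ⟨i.1, Nat.lt_of_succ_lt hi1n⟩ ≠ -1 := by
        rw [e0, e1, ← hεdef]; exact hε1.2
      have hj01 : jj ⟨i.1, Nat.lt_of_succ_lt hi1n⟩ = jj ⟨i.1 + 1, hi1n⟩ := by
        rw [e0, e1, hji1]
      have hWs := Wt_swap_nat_jeq ρ hζ hr0 hrK hsplit h2K hW i.1 hi1n hj01 ha0 ha1 ham1
      set α' := swapWt (mkIdx i.1 hi1n) α with hα'
      have hα'1 : α' i1 = α i := by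
        rw [hα', ← e1, swapWt_mk_hi _ hi1n α _ rfl, e0]
      have hα'k : α' k = α k := by
        rw [hα', swapWt_mk_ne _ hi1n α k (by omega) (by omega)]
      obtain ⟨m, g1, g2, g3, g4⟩ := IH (d - 1) (by omega) α' jj hWs i1 k hi1b
        (by simp [hi1def]; omega) (by rw [hji1, hjik]) (by rw [hα'1, hα'k, hαik]) s hs
      have hg1 : i.1 + 1 < m.1 := Fin.lt_def.mp g1
      have hα'm : α' m = α m := by
        rw [hα', swapWt_mk_ne _ hi1n α m (by omega) (by omega)]
      refine ⟨m, Fin.lt_def.mpr (by omega), g2, by rw [g3, hji1], ?_⟩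
      rw [← hα'm, g4, hα'1]

end Comb4

end DegYH

open DegYH in
/-- **Proposition 5.9**: let `𝕂` be algebraically closed of characteristic `p > 2`
with `p ∤ r` and let `(α, j) ∈ Spec_p(D_{r,n})`, i.e. a weight of some irreducible
completely splittable integral `D_{r,n}`-module. If `α_i = α_k` for some `i < k`
with `j_i = j_k`, then both `α_i + 1` and `α_i - 1` occur among the `α_m` with
`i < m < k` and `j_m = j_i`. -/
theorem spec_weights_between
    (K : Type) [Field K] [IsAlgClosed K] (p r n : ℕ) [CharP K p]
    (hp : 2 < p) (hpr : ¬ p ∣ r) (hr : 0 < r) (hn : 0 < n)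
    (ζ : K) (hζ : IsPrimitiveRoot ζ r)
    (M : Type) [AddCommGroup M] [Module K M] [FiniteDimensional K M]
    (ρ : DYH K r n →ₐ[K] Module.End K M)
    (hsimple : SimpleRepK K ρ) (hsplit : SplittableRep K r n ρ)
    (hint : IntegralRep K r n ρ)
    (α : Fin n → K) (j : Fin n → Fin r)
    (hwt : ∃ w : M, w ≠ 0 ∧ InWtD K r n ρ ζ α j w) :
    ∀ i k : Fin n, i < k → j i = j k → α i = α k →
      (∃ m : Fin n, i < m ∧ m < k ∧ j m = j i ∧ α m = α i + 1) ∧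
      (∃ m : Fin n, i < m ∧ m < k ∧ j m = j i ∧ α m = α i - 1) := by
  have hrK : (r : K) ≠ 0 := fun h => hpr ((CharP.cast_eq_zero_iff K p r).mp h)
  have h2K : (2 : K) ≠ 0 := by
    intro h
    have h2 := (CharP.cast_eq_zero_iff K p 2).mp (by exact_mod_cast h)
    have := Nat.le_of_dvd (by norm_num) h2
    omega
  have hW : Wt (M := M) (ζ := ζ) ρ α j := hwt
  intro i k hik hjik hαik
  constructor
  · exact comb_main ρ hζ hr hrK hsplit h2K (k.1 - i.1) α j hW i k hik rfl hjik hαik 1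
      (Or.inl rfl)
  · obtain ⟨m, h1, h2, h3, h4⟩ := comb_main ρ hζ hr hrK hsplit h2K (k.1 - i.1) α j hW i k
      hik rfl hjik hαik (-1) (Or.inr rfl)
    exact ⟨m, h1, h2, h3, by rw [h4]; ring⟩
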